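/- Let Γ be a group, H₁,...,H_k, Γ' subgroups of Γ, and E a uniformly convex real Banach space. Assume that each pair (Γ, H_i) has relative property (F_E), that Γ' ⊆ ⟨H₁,...,H_k⟩, and that H₁,...,H_k boundedly generate Γ', i.e. there is N ∈ ℕ such that every g ∈ Γ' is a product of at most N elements of H₁ ∪ ... ∪ H_k. Then the pair (Γ, Γ') has relative property (F_E): every affine isometric action of Γ on E has a point fixed by every element of Γ'. -/

import Mathlib

open Metric Filter

/-- **the bounded generation lemma.** Let `Γ` be a group,
`H₁, …, H_k, Γ'` subgroups of `Γ`, and `E` a uniformly convex real Banach space.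
Assume that each pair `(Γ, Hᵢ)` has relative property `(F_E)`, that
`Γ' ⊆ ⟨H₁, …, H_k⟩`, and that `H₁, …, H_k` boundedly generate `Γ'`.  Then the pair
`(Γ, Γ')` has relative property `(F_E)`: every affine isometric action of `Γ` on `E`
has a point fixed by every element of `Γ'`. -/
theorem bounded_generation_relative_fixed_point
    {Γ : Type*} [Group Γ] {k : ℕ} (H : Fin k → Subgroup Γ) (Γ' : Subgroup Γ)
    {E : Type*} [NormedAddCommGroup E] [NormedSpace ℝ E] [CompleteSpace E]
    [UniformConvexSpace E]
    (hrel : ∀ i : Fin k, ∀ ρ : Γ →* (E ≃ᵃⁱ[ℝ] E), ∃ ξ : E, ∀ h ∈ H i, (ρ h) ξ = ξ)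
    (hsub : Γ' ≤ ⨆ i, H i)
    (hbg : ∃ N : ℕ, ∀ g ∈ Γ', ∃ l : List Γ,
      l.length ≤ N ∧ (∀ x ∈ l, ∃ i, x ∈ H i) ∧ l.prod = g)
    (ρ : Γ →* (E ≃ᵃⁱ[ℝ] E)) :
    ∃ ξ : E, ∀ g ∈ Γ', (ρ g) ξ = ξ := by
  classical
  obtain ⟨N, hN⟩ := hbg
  choose ξ hξ using fun i => hrel i ρ
  -- a bound on the norms of the fixed points
  set M : ℝ := ((Finset.univ.sup fun i => ‖ξ i‖₊ : NNReal) : ℝ) with hM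
  have hM0 : 0 ≤ M := NNReal.coe_nonneg _
  have hMle : ∀ i, ‖ξ i‖ ≤ M := by
    intro i
    have := Finset.le_sup (f := fun i => ‖ξ i‖₊) (Finset.mem_univ i)
    exact_mod_cast this
  -- each generator moves `0` by at most `2 * M`
  have hgen : ∀ x : Γ, (∃ i, x ∈ H i) → dist ((ρ x) (0 : E)) 0 ≤ 2 * M := by
    rintro x ⟨i, hx⟩
    have h1 : (ρ x) (ξ i) = ξ i := hξ i x hx
    calc dist ((ρ x) (0 : E)) 0
        ≤ dist ((ρ x) (0 : E)) ((ρ x) (ξ i)) + dist ((ρ x) (ξ i)) 0 :=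
          dist_triangle _ _ _
      _ = dist (0 : E) (ξ i) + dist (ξ i) 0 := by rw [(ρ x).dist_map, h1]
      _ ≤ 2 * M := by
          rw [dist_comm (0 : E) (ξ i), dist_zero_right]
          linarith [hMle i]
  -- products of at most `N` generators move `0` by at most `N * (2 * M)`
  have hlist : ∀ l : List Γ, (∀ x ∈ l, ∃ i, x ∈ H i) →
      dist ((ρ l.prod) (0 : E)) 0 ≤ l.length * (2 * M) := by
    intro l
    induction l with
    | nil => intro _; simp
    | cons a l ih =>
      intro hmem
      have ha : dist ((ρ a) (0 : E)) 0 ≤ 2 * M :=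
        hgen a (hmem a (List.mem_cons_self))
      have hl : dist ((ρ l.prod) (0 : E)) 0 ≤ l.length * (2 * M) :=
        ih fun x hx => hmem x (List.mem_cons_of_mem a hx)
      have happ : (ρ (a :: l).prod) (0 : E) = (ρ a) ((ρ l.prod) 0) := by
        rw [List.prod_cons, map_mul]
        simp [AffineIsometryEquiv.coe_mul]
      calc dist ((ρ (a :: l).prod) (0 : E)) 0
          = dist ((ρ a) ((ρ l.prod) (0 : E))) 0 := by rw [happ]
        _ ≤ dist ((ρ a) ((ρ l.prod) (0 : E))) ((ρ a) 0) + dist ((ρ a) 0) 0 :=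
            dist_triangle _ _ _
        _ = dist ((ρ l.prod) (0 : E)) 0 + dist ((ρ a) 0) 0 := by
            rw [(ρ a).dist_map]
        _ ≤ l.length * (2 * M) + 2 * M := add_le_add hl ha
        _ = (a :: l).length * (2 * M) := by
            simp [List.length_cons]; ring
  set C : ℝ := N * (2 * M) with hC
  have horb : ∀ g ∈ Γ', dist ((ρ g) (0 : E)) 0 ≤ C := by
    intro g hg
    obtain ⟨l, hlen, hmem, hprod⟩ := hN g hg
    rw [← hprod]
    refine (hlist l hmem).trans ?_
    have : (l.length : ℝ) ≤ N := by exact_mod_cast hlen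
    have h2M : 0 ≤ 2 * M := by linarith
    exact mul_le_mul_of_nonneg_right this h2M
  -- the orbit of `0` under `Γ'`
  set S : Set E := Set.range (fun g : Γ' => (ρ (g : Γ)) (0 : E)) with hS
  have hS0 : (0 : E) ∈ S := by
    refine ⟨1, ?_⟩
    simp
  have hSne : S.Nonempty := ⟨0, hS0⟩
  have hSb : ∀ s ∈ S, dist s 0 ≤ C := by
    rintro s ⟨g, rfl⟩
    exact horb g g.2
  -- the radius function
  set r : E → ℝ := fun x => sSup ((dist x) '' S) with hr
  have hbdd : ∀ x : E, BddAbove ((dist x) '' S) := by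
    intro x
    refine ⟨dist x 0 + C, ?_⟩
    rintro t ⟨s, hs, rfl⟩
    calc dist x s ≤ dist x 0 + dist 0 s := dist_triangle _ _ _
      _ ≤ dist x 0 + C := by rw [dist_comm (0:E) s]; linarith [hSb s hs]
  have hler : ∀ x : E, ∀ s ∈ S, dist x s ≤ r x := fun x s hs =>
    le_csSup (hbdd x) (Set.mem_image_of_mem _ hs)
  have hr0 : ∀ x : E, 0 ≤ r x := fun x =>
    dist_nonneg.trans (hler x 0 hS0)
  -- for `g ∈ Γ'`, the radius does not increase along `ρ g`
  have hrinv : ∀ g ∈ Γ', ∀ x : E, r ((ρ g) x) ≤ r x := by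
    intro g hg x
    refine csSup_le (hSne.image _) ?_
    rintro t ⟨s, hs, rfl⟩
    obtain ⟨h, rfl⟩ := hs
    show dist ((ρ g) x) ((ρ (h : Γ)) 0) ≤ r x
    have key : (ρ (h : Γ)) (0 : E) = (ρ g) ((ρ (g⁻¹ * (h : Γ))) 0) := by
      have : (ρ g) ((ρ (g⁻¹ * (h : Γ))) (0 : E))
          = (ρ (g * (g⁻¹ * (h : Γ)))) 0 := by
        rw [map_mul]; simp [AffineIsometryEquiv.coe_mul]
      rw [this, mul_inv_cancel_left]
    rw [key, (ρ g).dist_map]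
    exact hler x _ ⟨(⟨g, hg⟩⁻¹ * h : Γ'), rfl⟩
  -- the optimal radius
  have hrange_ne : (Set.range r).Nonempty := ⟨r 0, ⟨0, rfl⟩⟩
  have hbdd_below : BddBelow (Set.range r) := by
    refine ⟨0, ?_⟩; rintro t ⟨x, rfl⟩; exact hr0 x
  set r₀ : ℝ := sInf (Set.range r) with hr₀
  have hr₀0 : 0 ≤ r₀ := by
    refine le_csInf hrange_ne ?_
    rintro t ⟨x, rfl⟩; exact hr0 x
  have hr₀le : ∀ x : E, r₀ ≤ r x := fun x => csInf_le hbdd_below ⟨x, rfl⟩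
  -- the key uniform-convexity claim: near-minimizers are uniformly close
  have claim : ∀ ε > (0 : ℝ), ∃ η > (0 : ℝ), ∀ x y : E,
      r x ≤ r₀ + η → r y ≤ r₀ + η → dist x y ≤ ε := by
    intro ε hε
    rcases eq_or_lt_of_le hr₀0 with h0 | hpos
    · refine ⟨ε / 2, half_pos hε, fun x y hx hy => ?_⟩
      have h1 := hler x 0 hS0
      have h2 := hler y 0 hS0
      calc dist x y ≤ dist x 0 + dist 0 y := dist_triangle _ _ _
        _ ≤ ε := by rw [dist_comm (0 : E) y]; linarith
    · have hden : (0 : ℝ) < r₀ + 1 := by linarith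
      obtain ⟨δ, hδ, hconv⟩ :=
        exists_forall_closed_ball_dist_add_le_two_sub E
          (show (0 : ℝ) < ε / (r₀ + 1) from div_pos hε hden)
      refine ⟨min 1 (δ * r₀ / 4), lt_min one_pos (by positivity), fun x y hx hy => ?_⟩
      by_contra hxy
      push_neg at hxy
      set η : ℝ := min 1 (δ * r₀ / 4) with hη
      have hη1 : η ≤ 1 := min_le_left _ _
      have hη2 : η ≤ δ * r₀ / 4 := min_le_right _ _
      have hηpos : 0 < η := lt_min one_pos (by positivity)
      set R : ℝ := r₀ + η with hRdef
      have hRpos : 0 < R := by simp only [hRdef]; linarith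
      have hRle : R ≤ r₀ + 1 := by simp only [hRdef]; linarith
      have hmid : ∀ s ∈ S, dist ((1 / 2 : ℝ) • (x + y)) s ≤ (2 - δ) * R / 2 := by
        intro s hs
        have hxs : ‖x - s‖ ≤ R := by
          rw [← dist_eq_norm]; exact (hler x s hs).trans hx
        have hys : ‖y - s‖ ≤ R := by
          rw [← dist_eq_norm]; exact (hler y s hs).trans hy
        have hu : ‖R⁻¹ • (x - s)‖ ≤ 1 := by
          rw [norm_smul, Real.norm_eq_abs, abs_inv, abs_of_pos hRpos]
          rw [inv_mul_le_iff₀ hRpos]; simpa using hxs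
        have hv : ‖R⁻¹ • (y - s)‖ ≤ 1 := by
          rw [norm_smul, Real.norm_eq_abs, abs_inv, abs_of_pos hRpos]
          rw [inv_mul_le_iff₀ hRpos]; simpa using hys
        have hdiff : R⁻¹ • (x - s) - R⁻¹ • (y - s) = R⁻¹ • (x - y) := by
          rw [← smul_sub]; congr 1; abel
        have huv : ε / (r₀ + 1) ≤ ‖R⁻¹ • (x - s) - R⁻¹ • (y - s)‖ := by
          rw [hdiff, norm_smul, Real.norm_eq_abs, abs_inv, abs_of_pos hRpos]
          have hxy' : ε ≤ ‖x - y‖ := by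
            rw [← dist_eq_norm]; exact hxy.le
          calc ε / (r₀ + 1) ≤ ε / R := by gcongr
            _ ≤ ‖x - y‖ / R := by gcongr
            _ = R⁻¹ * ‖x - y‖ := by rw [div_eq_inv_mul]
        have hsum : ‖(x - s) + (y - s)‖ ≤ (2 - δ) * R := by
          have h2 : ‖R⁻¹ • (x - s) + R⁻¹ • (y - s)‖ ≤ 2 - δ := hconv hu hv huv
          rw [← smul_add, norm_smul, Real.norm_eq_abs, abs_inv, abs_of_pos hRpos,
            inv_mul_le_iff₀ hRpos] at h2
          linarith [h2]
        have hmid_eq : dist ((1 / 2 : ℝ) • (x + y)) s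
            = ‖(x - s) + (y - s)‖ / 2 := by
          rw [dist_eq_norm]
          have heq : (1 / 2 : ℝ) • (x + y) - s = (1 / 2 : ℝ) • ((x - s) + (y - s)) := by
            module
          rw [heq, norm_smul, Real.norm_eq_abs,
            abs_of_pos (by norm_num : (0:ℝ) < 1/2)]
          ring
        rw [hmid_eq]
        gcongr
      have h1 : r ((1 / 2 : ℝ) • (x + y)) ≤ (2 - δ) * R / 2 := by
        refine csSup_le (hSne.image _) ?_
        rintro t ⟨s, hs, rfl⟩
        exact hmid s hs
      have h2 : r₀ ≤ (2 - δ) * R / 2 := (hr₀le _).trans h1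
      have hexp : (2 - δ) * R / 2 = r₀ + η - δ * (r₀ + η) / 2 := by
        simp only [hRdef]; ring
      nlinarith [mul_pos hδ hηpos, mul_pos hδ hpos]
  -- a minimizing sequence
  have hmin : ∀ n : ℕ, ∃ x : E, r x < r₀ + 1 / (n + 1) := by
    intro n
    have hlt : r₀ < r₀ + 1 / (n + 1 : ℝ) := by
      have : (0 : ℝ) < 1 / (n + 1 : ℝ) := by positivity
      linarith
    obtain ⟨t, ⟨x, rfl⟩, ht⟩ := exists_lt_of_csInf_lt hrange_ne hlt
    exact ⟨x, ht⟩
  choose x hx using hmin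
  have hcauchy : CauchySeq x := by
    rw [Metric.cauchySeq_iff]
    intro ε hε
    obtain ⟨η, hη, hclaim⟩ := claim (ε / 2) (half_pos hε)
    obtain ⟨n₀, hn₀⟩ := exists_nat_one_div_lt hη
    have bound : ∀ p ≥ n₀, r (x p) ≤ r₀ + η := by
      intro p hp
      have h1 : (1 : ℝ) / (p + 1) ≤ 1 / (n₀ + 1) := by
        apply one_div_le_one_div_of_le
        · positivity
        · exact_mod_cast add_le_add_left (Nat.cast_le.2 hp) 1
      linarith [hx p]
    refine ⟨n₀, fun m hm n hn => ?_⟩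
    calc dist (x m) (x n) ≤ ε / 2 := hclaim _ _ (bound m hm) (bound n hn)
      _ < ε := half_lt_self hε
  obtain ⟨ξs, hlim⟩ := cauchySeq_tendsto_of_complete hcauchy
  have hξs : r ξs ≤ r₀ := by
    refine csSup_le (hSne.image _) ?_
    rintro t ⟨s, hs, rfl⟩
    have h1 : Tendsto (fun n => dist (x n) s) atTop (nhds (dist ξs s)) :=
      hlim.dist tendsto_const_nhds
    have h2 : Tendsto (fun n : ℕ => r₀ + 1 / (n + 1 : ℝ)) atTop (nhds r₀) := by
      have h3 : Tendsto (fun n : ℕ => 1 / (n + 1 : ℝ)) atTop (nhds 0) :=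
        tendsto_one_div_add_atTop_nhds_zero_nat
      simpa using tendsto_const_nhds.add h3
    exact le_of_tendsto_of_tendsto' h1 h2
      (fun n => (hler (x n) s hs).trans (hx n).le)
  refine ⟨ξs, fun g hg => ?_⟩
  have key : ∀ ε > (0 : ℝ), dist ((ρ g) ξs) ξs ≤ ε := by
    intro ε hε
    obtain ⟨η, hη, hclaim⟩ := claim ε hε
    exact hclaim _ _
      ((hrinv g hg ξs).trans (hξs.trans (le_add_of_nonneg_right hη.le)))
      (hξs.trans (le_add_of_nonneg_right hη.le))
  have hd0 : dist ((ρ g) ξs) ξs ≤ 0 := by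
    by_contra hpos
    push_neg at hpos
    have := key (dist ((ρ g) ξs) ξs / 2) (half_pos hpos)
    linarith
  exact dist_le_zero.1 hd0
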